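/- For the triangle with sides a = 2, b = 3, c = √7, no solution (x, y, z) with xyz ≠ 0 of the two bisector equations has all of x, y, z constructible (equivalently, the ratio z/y is never constructible). -/

import Mathlib

set_option maxHeartbeats 1000000
set_option synthInstance.maxHeartbeats 400000

open Polynomial IntermediateField Module

/-- A real number is constructible with compass and straightedge iff it lies in a field
obtained from ℚ (the prime subfield `⊥` of `ℝ`) by a finite tower of quadratic extensions. -/
def ConstructibleReal (α : ℝ) : Prop :=
  ∃ (n : ℕ) (F : ℕ → Subfield ℝ), F 0 = ⊥ ∧
    (∀ i < n, F i ≤ F (i + 1) ∧ Subfield.relfinrank (F i) (F (i + 1)) = 2) ∧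
    α ∈ F n

/-- Step: extend a power-of-two field along a quadratic extension. -/
lemma step_lemma (A B M : IntermediateField ℚ ℝ) (hAB : A ≤ B)
    (h2 : IntermediateField.relfinrank A B = 2) (hAM : A ≤ M)
    (r : ℕ) (hr : Module.finrank ℚ M = 2 ^ r) :
    ∃ M' : IntermediateField ℚ ℝ, M ≤ M' ∧ B ≤ M' ∧
      ∃ r', Module.finrank ℚ M' = 2 ^ r' := by
  have hfr : Module.finrank A (extendScalars hAB) = 2 := by
    rw [← IntermediateField.relfinrank_eq_finrank_of_le hAB]; exact h2
  have hfd : FiniteDimensional A (extendScalars hAB) :=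
    FiniteDimensional.of_finrank_pos (by rw [hfr]; norm_num)
  obtain ⟨u, huB, huA⟩ : ∃ u, u ∈ B ∧ u ∉ A := by
    by_contra h
    push_neg at h
    have hBA : B ≤ A := fun x hx => h x hx
    have := IntermediateField.relfinrank_eq_one_of_le (A := A) (B := B) hBA
    rw [h2] at this; norm_num at this
  -- any v ∈ B is linearly dependent with 1, u over A
  have dep : ∀ v : ℝ, v ∈ B → ∃ g : Fin 3 → A,
      ((g 0 : ℝ) + (g 1 : ℝ) * u + (g 2 : ℝ) * v = 0) ∧ ∃ i, g i ≠ 0 := by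
    intro v hvB
    have hnli : ¬ LinearIndependent A
        ![(1 : extendScalars hAB), ⟨u, (mem_extendScalars hAB).2 huB⟩,
          ⟨v, (mem_extendScalars hAB).2 hvB⟩] := by
      intro hli
      have := hli.fintype_card_le_finrank
      rw [hfr] at this
      simp at this
    rw [Fintype.not_linearIndependent_iff] at hnli
    obtain ⟨g, hsum, hi⟩ := hnli
    refine ⟨g, ?_, hi⟩
    have h0 := congrArg (Subtype.val) hsum
    push_cast at h0
    simp [Fin.sum_univ_three] at h0
    have h0' : (g 0 : ℝ) * 1 + (g 1 : ℝ) * u + (g 2 : ℝ) * v = 0 := h0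
    linear_combination h0'
  -- u satisfies a monic quadratic over A
  obtain ⟨b, hbA, c, hcA, hquad⟩ :
      ∃ b, b ∈ A ∧ ∃ c, c ∈ A ∧ u ^ 2 + b * u + c = 0 := by
    obtain ⟨g, hg, hi⟩ := dep (u * u) (mul_mem huB huB)
    have hg2 : (g 2 : ℝ) ≠ 0 := by
      intro hg2
      rcases eq_or_ne (g 1 : ℝ) 0 with hg1 | hg1
      · have hg0 : (g 0 : ℝ) = 0 := by rw [hg2, hg1] at hg; linarith
        obtain ⟨i, hine⟩ := hi
        fin_cases i
        · exact hine (Subtype.ext (by exact_mod_cast hg0))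
        · exact hine (Subtype.ext (by exact_mod_cast hg1))
        · exact hine (Subtype.ext (by exact_mod_cast hg2))
      · apply huA
        have hu : u = -(g 0 : ℝ) / (g 1 : ℝ) := by
          rw [hg2] at hg; field_simp; linarith
        rw [hu]
        exact div_mem (neg_mem (g 0).2) (g 1).2
    refine ⟨(g 1 : ℝ) / (g 2 : ℝ), div_mem (g 1).2 (g 2).2,
      (g 0 : ℝ) / (g 2 : ℝ), div_mem (g 0).2 (g 2).2, ?_⟩
    field_simp
    nlinarith [hg]
  -- the new field
  refine ⟨IntermediateField.restrictScalars ℚ (IntermediateField.adjoin M {u}), ?_, ?_, ?_⟩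
  · intro x hx
    rw [IntermediateField.mem_restrictScalars]
    exact (IntermediateField.adjoin M {u}).algebraMap_mem ⟨x, hx⟩
  · -- B ≤ M'
    intro v hvB
    rw [IntermediateField.mem_restrictScalars]
    obtain ⟨f, hf, hfi⟩ := dep v hvB
    have hf2 : (f 2 : ℝ) ≠ 0 := by
      intro hf2
      rcases eq_or_ne (f 1 : ℝ) 0 with hf1 | hf1
      · have hf0 : (f 0 : ℝ) = 0 := by rw [hf2, hf1] at hf; linarith
        obtain ⟨i, hine⟩ := hfi
        fin_cases i
        · exact hine (Subtype.ext (by exact_mod_cast hf0))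
        · exact hine (Subtype.ext (by exact_mod_cast hf1))
        · exact hine (Subtype.ext (by exact_mod_cast hf2))
      · apply huA
        have hu : u = -(f 0 : ℝ) / (f 1 : ℝ) := by
          rw [hf2] at hf; field_simp; linarith
        rw [hu]
        exact div_mem (neg_mem (f 0).2) (f 1).2
    have hv : v = (-(f 0 : ℝ) - (f 1 : ℝ) * u) / (f 2 : ℝ) := by
      field_simp; linarith
    rw [hv]
    have hmem : ∀ w : ℝ, w ∈ A → w ∈ IntermediateField.adjoin M {u} := by
      intro w hw
      exact (IntermediateField.adjoin M {u}).algebraMap_mem ⟨w, hAM hw⟩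
    have humem : u ∈ IntermediateField.adjoin M {u} :=
      IntermediateField.subset_adjoin M {u} rfl
    exact div_mem (sub_mem (neg_mem (hmem _ (f 0).2)) (mul_mem (hmem _ (f 1).2) humem))
      (hmem _ (f 2).2)
  · -- finrank
    have hbM : b ∈ M := hAM hbA
    have hcM : c ∈ M := hAM hcA
    set q : Polynomial M := X ^ 2 + C ⟨b, hbM⟩ * X + C ⟨c, hcM⟩ with hq
    have hqm : q.Monic := by
      rw [hq, add_assoc]
      apply Polynomial.monic_X_pow_add
      apply lt_of_le_of_lt (Polynomial.degree_add_le _ _)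
      simp only [max_lt_iff]
      constructor
      · exact lt_of_le_of_lt (Polynomial.degree_C_mul_X_le _) (by norm_num)
      · exact lt_of_le_of_lt (Polynomial.degree_C_le) (by norm_num)
    have haev : Polynomial.aeval u q = 0 := by
      rw [hq]
      simp only [map_add, map_mul, Polynomial.aeval_X_pow, Polynomial.aeval_C,
        Polynomial.aeval_X]
      show u ^ 2 + (⟨b, hbM⟩ : M) * u + (⟨c, hcM⟩ : M) = 0
      push_cast
      exact hquad
    have hint : IsIntegral M u := ⟨q, hqm, haev⟩
    have hfdN : FiniteDimensional M (IntermediateField.adjoin M {u}) :=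
      IntermediateField.adjoin.finiteDimensional hint
    have hfdM : FiniteDimensional ℚ M :=
      FiniteDimensional.of_finrank_pos (by rw [hr]; positivity)
    have hd1 : 1 ≤ (minpoly M u).natDegree := minpoly.natDegree_pos hint
    have hd2 : (minpoly M u).natDegree ≤ 2 := by
      have hdvd : minpoly M u ∣ q := minpoly.dvd M u haev
      have := Polynomial.natDegree_le_of_dvd hdvd hqm.ne_zero
      have hqd : q.natDegree ≤ 2 := by rw [hq]; compute_degree
      omega
    have hfrN : Module.finrank M (IntermediateField.adjoin M {u}) = (minpoly M u).natDegree := by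
      exact IntermediateField.adjoin.finrank hint
    have hmul : Module.finrank ℚ M * Module.finrank M (IntermediateField.adjoin M {u})
        = Module.finrank ℚ (IntermediateField.adjoin M {u}) :=
      Module.finrank_mul_finrank ℚ M (IntermediateField.adjoin M {u})
    have hres : Module.finrank ℚ
        (IntermediateField.restrictScalars ℚ (IntermediateField.adjoin M {u}))
        = Module.finrank ℚ (IntermediateField.adjoin M {u}) := rfl
    rw [hres, ← hmul, hr, hfrN]
    interval_cases h : (minpoly M u).natDegree
    · exact ⟨r, by ring⟩
    · exact ⟨r + 1, by ring⟩

lemma constructible_mem_pow2 {α : ℝ} (h : ConstructibleReal α)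
    (M0 : IntermediateField ℚ ℝ) (r0 : ℕ) (h0 : Module.finrank ℚ M0 = 2 ^ r0) :
    ∃ M : IntermediateField ℚ ℝ, M0 ≤ M ∧ α ∈ M ∧ ∃ r, Module.finrank ℚ M = 2 ^ r := by
  obtain ⟨n, F, hF0, hstep, hmem⟩ := h
  let G : ℕ → IntermediateField ℚ ℝ := fun i =>
    (F i).toIntermediateField (fun q => by
      simpa using SubfieldClass.ratCast_mem (F i) q)
  have hGmem : ∀ i (x : ℝ), x ∈ G i ↔ x ∈ F i := fun i x => Iff.rfl
  have main : ∀ i, i ≤ n → ∃ M, M0 ≤ M ∧ G i ≤ M ∧ ∃ r, Module.finrank ℚ M = 2 ^ r := by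
    intro i
    induction i with
    | zero =>
      intro _
      refine ⟨M0, le_rfl, ?_, r0, h0⟩
      intro x hx
      have : x ∈ (⊥ : Subfield ℝ) := by rw [← hF0]; exact hx
      have hle : (⊥ : Subfield ℝ) ≤ M0.toSubfield := bot_le
      exact hle this
    | succ i ih =>
      intro hin
      obtain ⟨M, hM0M, hGiM, r, hrM⟩ := ih (by omega)
      obtain ⟨hle, h2⟩ := hstep i (by omega)
      have hle' : G i ≤ G (i + 1) := fun x hx => hle hx
      have h2' : IntermediateField.relfinrank (G i) (G (i + 1)) = 2 := h2
      obtain ⟨M', hMM', hBM', r', hr'⟩ := step_lemma (G i) (G (i + 1)) M hle' h2' hGiM r hrM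
      exact ⟨M', le_trans hM0M hMM', hBM', r', hr'⟩
  obtain ⟨M, hM0M, hGnM, r, hrM⟩ := main n le_rfl
  exact ⟨M, hM0M, hGnM hmem, r, hrM⟩

lemma no_rat_root (q : ℚ) : 45 * q ^ 3 - 66 * q ^ 2 + 11 * q + 14 ≠ 0 := by
  intro h
  have hd : (q.den : ℚ) ≠ 0 := by exact_mod_cast q.den_nz
  have hqnd : (q.num : ℚ) = q * (q.den : ℚ) := (div_eq_iff hd).mp (Rat.num_div_den q)
  have key : (45 * (q.num : ℚ) ^ 3 - 66 * (q.num : ℚ) ^ 2 * (q.den : ℚ)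
      + 11 * (q.num : ℚ) * (q.den : ℚ) ^ 2 + 14 * (q.den : ℚ) ^ 3) = 0 := by
    rw [hqnd]
    linear_combination (q.den : ℚ) ^ 3 * h
  have keyZ : (45 * q.num ^ 3 - 66 * q.num ^ 2 * (q.den : ℤ)
      + 11 * q.num * (q.den : ℤ) ^ 2 + 14 * (q.den : ℤ) ^ 3) = 0 := by
    exact_mod_cast key
  have h13 : ∀ a b : ZMod 13, 45 * a ^ 3 - 66 * a ^ 2 * b + 11 * a * b ^ 2 + 14 * b ^ 3 = 0
      → a = 0 ∧ b = 0 := by decide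
  have hz : (45 * (q.num : ZMod 13) ^ 3 - 66 * (q.num : ZMod 13) ^ 2 * (q.den : ZMod 13)
      + 11 * (q.num : ZMod 13) * (q.den : ZMod 13) ^ 2 + 14 * (q.den : ZMod 13) ^ 3) = 0 := by
    have := congrArg (fun t : ℤ => (t : ZMod 13)) keyZ
    push_cast at this
    convert this using 2 <;> push_cast <;> ring
  obtain ⟨hn, hdd⟩ := h13 _ _ hz
  have h1 : (13 : ℤ) ∣ q.num := by
    rwa [ZMod.intCast_zmod_eq_zero_iff_dvd] at hn
  have h2 : (13 : ℕ) ∣ q.den := by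
    rwa [ZMod.natCast_eq_zero_iff] at hdd
  have h1' : (13 : ℕ) ∣ q.num.natAbs := by
    rw [← Int.natAbs_dvd_natAbs] at h1; simpa using h1
  have hco := q.reduced
  have : (13 : ℕ) ∣ Nat.gcd q.num.natAbs q.den := Nat.dvd_gcd h1' h2
  rw [hco] at this
  omega

lemma cubic_not_pow2 {α : ℝ} (hcube : 45 * α ^ 3 - 66 * α ^ 2 + 11 * α + 14 = 0)
    (M : IntermediateField ℚ ℝ) (hmem : α ∈ M) (r : ℕ)
    (hfr : Module.finrank ℚ M = 2 ^ r) : False := by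
  set p : Polynomial ℚ := C 45 * X ^ 3 - C 66 * X ^ 2 + C 11 * X + C 14 with hp
  have haev : Polynomial.aeval α p = 0 := by
    rw [hp]
    simp only [map_add, map_sub, map_mul, Polynomial.aeval_X_pow, Polynomial.aeval_C,
      Polynomial.aeval_X]
    push_cast
    convert hcube using 2 <;> norm_num
  have hpdeg : p.natDegree = 3 := by rw [hp]; compute_degree!
  have hp0 : p ≠ 0 := fun h => by simp [h] at hpdeg
  have hint : IsIntegral ℚ α := (isAlgebraic_iff_isIntegral.mp ⟨p, hp0, haev⟩)
  set m := minpoly ℚ α with hm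
  have hdvd : m ∣ p := minpoly.dvd ℚ α haev
  -- natDegree m divides 2 ^ r
  have hadj : IntermediateField.adjoin ℚ {α} ≤ M := by
    rw [IntermediateField.adjoin_le_iff]
    exact Set.singleton_subset_iff.mpr hmem
  have hfin : Module.finrank ℚ (IntermediateField.adjoin ℚ {α}) = m.natDegree := by
    exact IntermediateField.adjoin.finrank hint
  have hdd : m.natDegree ∣ 2 ^ r :=
    ⟨_, by rw [← hfr, ← IntermediateField.finrank_bot_mul_relfinrank hadj, hfin]⟩
  have hle3 : m.natDegree ≤ 3 := hpdeg ▸ Polynomial.natDegree_le_of_dvd hdvd hp0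
  have hge1 : 1 ≤ m.natDegree := minpoly.natDegree_pos hint
  have hdeg12 : m.natDegree = 1 ∨ m.natDegree = 2 := by
    obtain ⟨k, hk, hkeq⟩ := (Nat.dvd_prime_pow Nat.prime_two).mp hdd
    match k, hkeq with
    | 0, hkeq => left; simpa using hkeq
    | 1, hkeq => right; simpa using hkeq
    | (j+2), hkeq =>
      exfalso
      have h2j : 1 ≤ 2 ^ j := Nat.one_le_two_pow
      have : 2 ^ (j + 2) = 4 * 2 ^ j := by ring
      omega
  -- in both cases p has a linear factor over ℚ
  obtain ⟨l, hldvd, hldeg⟩ : ∃ l : Polynomial ℚ, l ∣ p ∧ l.natDegree = 1 := by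
    rcases hdeg12 with h1 | h2
    · exact ⟨m, hdvd, h1⟩
    · obtain ⟨g, hg⟩ := hdvd
      refine ⟨g, ⟨m, by rw [hg]; ring⟩, ?_⟩
      have hm0 : m ≠ 0 := minpoly.ne_zero hint
      have hg0 : g ≠ 0 := by
        intro h0; rw [h0, mul_zero] at hg; exact hp0 hg
      have := Polynomial.natDegree_mul hm0 hg0
      rw [← hg, hpdeg, h2] at this
      omega
  obtain ⟨a, ha, bb, hl⟩ := Polynomial.natDegree_eq_one.mp hldeg
  have hroot : Polynomial.eval (-bb / a) p = 0 := by
    obtain ⟨g', hg'⟩ := hldvd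
    have hl0 : Polynomial.eval (-bb / a) l = 0 := by
      rw [← hl]
      simp only [Polynomial.eval_add, Polynomial.eval_mul, Polynomial.eval_C, Polynomial.eval_X]
      field_simp
      ring
    rw [hg', Polynomial.eval_mul, hl0, zero_mul]
  rw [hp] at hroot
  simp at hroot
  exact no_rat_root (-bb / a) (by linarith [hroot])

theorem bisector_solution_not_constructible (x y z : ℝ)
    (hx : x ≠ 0) (hy : y ≠ 0) (hz : z ≠ 0)
    (h1 : -x * (7 * y ^ 2 - 9 * z ^ 2) + y * z * (2 * y - 6 * z) = 0)
    (h2 : -y * (4 * z ^ 2 - 7 * x ^ 2) + x * z * (6 * z - 12 * x) = 0) :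
    ¬ (ConstructibleReal x ∧ ConstructibleReal y ∧ ConstructibleReal z) ∧
    ¬ ConstructibleReal (z / y) := by
  have hP : 45 * z ^ 3 - 66 * z ^ 2 * y + 11 * z * y ^ 2 + 14 * y ^ 3 = 0 := by
    have h12 : (-12 : ℝ) * y ^ 2 * z ^ 2 ≠ 0 := by positivity
    apply mul_left_cancel₀ h12
    rw [mul_zero]
    linear_combination (7 * y ^ 2 - 9 * z ^ 2) ^ 2 * h2 -
      (((-x * (7 * y ^ 2 - 9 * z ^ 2) + y * z * (2 * y - 6 * z)) -
        2 * (y * z * (2 * y - 6 * z))) * (7 * y - 12 * z)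
        - 6 * z ^ 2 * (7 * y ^ 2 - 9 * z ^ 2)) * h1
  have ht : 45 * (z / y) ^ 3 - 66 * (z / y) ^ 2 + 11 * (z / y) + 14 = 0 := by
    field_simp
    linear_combination hP
  have hbotfin : Module.finrank ℚ ((⊥ : IntermediateField ℚ ℝ)) = 2 ^ 0 := by
    rw [pow_zero]; exact IntermediateField.finrank_bot
  constructor
  · rintro ⟨-, hcy, hcz⟩
    obtain ⟨My, -, hyMy, ry, hry⟩ := constructible_mem_pow2 hcy ⊥ 0 hbotfin
    obtain ⟨M, hMyM, hzM, r, hrM⟩ := constructible_mem_pow2 hcz My ry hry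
    have hyM : y ∈ M := hMyM hyMy
    exact cubic_not_pow2 ht M (div_mem hzM hyM) r hrM
  · intro hc
    obtain ⟨M, -, hmem, r, hrM⟩ := constructible_mem_pow2 hc ⊥ 0 hbotfin
    exact cubic_not_pow2 ht M hmem r hrM
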